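/- Let F be a field, let N be an invertible n×n matrix over F, let X be an m×n matrix over F, and let Y be an n×m matrix over F. Then the (m+n)×(n+m) block matrix [[X, 0_{m×m}],[N, Y]] satisfies det([[X, 0],[N, Y]]) = (−1)^{m(n+1)} · det(N) · det(X·N^{−1}·Y). -/

import Mathlib

open Matrix Equiv
open Fin.NatCast

private lemma sign_addRight_natCast (K : ℕ) [NeZero K] (m : ℕ) :
    Equiv.Perm.sign (Equiv.addRight ((m : Fin K)) : Equiv.Perm (Fin K)) = (-1) ^ ((K - 1) * m) := by
  obtain ⟨k, rfl⟩ : ∃ k, K = k + 1 := ⟨K - 1, by have := NeZero.pos K; omega⟩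
  simp only [Nat.add_sub_cancel]
  induction m with
  | zero =>
      have : (Equiv.addRight ((0 : ℕ) : Fin (k + 1)) : Equiv.Perm (Fin (k + 1))) = 1 := by
        ext i; simp
      rw [this]; simp
  | succ m ih =>
      have hsplit : (Equiv.addRight (((m + 1 : ℕ)) : Fin (k + 1)) : Equiv.Perm (Fin (k + 1)))
          = Equiv.addRight (1 : Fin (k + 1)) * Equiv.addRight ((m : Fin (k + 1))) := by
        ext i
        simp [Equiv.Perm.mul_apply, add_assoc, Nat.cast_add, Nat.cast_one]
      have hrot : (Equiv.addRight (1 : Fin (k + 1)) : Equiv.Perm (Fin (k + 1)))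
          = finRotate (k + 1) := by
        ext i; simp [finRotate_succ_apply]
      rw [hsplit, _root_.map_mul, hrot, sign_finRotate, ih]
      rw [← pow_add]
      congr 1
      rw [Nat.add_sub_cancel]
      ring


/-- For an invertible `n×n` matrix `N`, an `m×n` matrix `X` and an
`n×m` matrix `Y` over a field `F`, the `(m+n)×(n+m)` block matrix `[[X, 0],[N, Y]]`
(viewed as a square matrix of size `m+n`) satisfies
`det [[X, 0],[N, Y]] = (−1)^{m(n+1)} · det N · det (X · N⁻¹ · Y)`. -/
theorem statement14 (F : Type*) [Field F] (m n : ℕ)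
    (N : Matrix (Fin n) (Fin n) F) (X : Matrix (Fin m) (Fin n) F)
    (Y : Matrix (Fin n) (Fin m) F) (hN : IsUnit N.det) :
    ((Matrix.fromBlocks X (0 : Matrix (Fin m) (Fin m) F) N Y).submatrix
        (finSumFinEquiv (m := m) (n := n)).symm
        (fun j : Fin (m + n) =>
          (finSumFinEquiv (m := n) (n := m)).symm (Fin.cast (Nat.add_comm m n) j))).det
      = (-1 : F) ^ (m * (n + 1)) * N.det * (X * N⁻¹ * Y).det := by
  rcases Nat.eq_zero_or_pos (m + n) with h0 | hpos
  · have hm : m = 0 := by omega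
    have hn : n = 0 := by omega
    subst hm; subst hn
    simp [Matrix.det_fin_zero]
  haveI : NeZero (m + n) := ⟨by omega⟩
  haveI := N.invertibleOfIsUnitDet hN
  -- the key pointwise computation
  have key : ∀ j : Fin (m + n),
      finSumFinEquiv (Equiv.sumComm (Fin n) (Fin m)
          ((finSumFinEquiv (m := n) (n := m)).symm (Fin.cast (Nat.add_comm m n) j)))
        = Equiv.addRight ((m : Fin (m + n))) j := by
    intro j
    have hmval : ((m : Fin (m + n)) : ℕ) = m % (m + n) := Fin.val_natCast m (m + n)
    have hle := Nat.mod_le m (m + n)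
    have hlt := Nat.mod_lt m (y := m + n) hpos
    have hM : m % (m + n) = m ∨ (n = 0 ∧ m % (m + n) = 0) := by
      rcases Nat.eq_zero_or_pos n with hn | hn
      · refine Or.inr ⟨hn, ?_⟩
        subst hn; simp
      · exact Or.inl (Nat.mod_eq_of_lt (by omega))
    have hout : (((j : ℕ) + m % (m + n)) % (m + n) = (j : ℕ) + m % (m + n)
          ∧ (j : ℕ) + m % (m + n) < m + n)
        ∨ (((j : ℕ) + m % (m + n)) % (m + n) = (j : ℕ) + m % (m + n) - (m + n)
            ∧ m + n ≤ (j : ℕ) + m % (m + n)) := by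
      rcases lt_or_ge ((j : ℕ) + m % (m + n)) (m + n) with h | h
      · exact Or.inl ⟨Nat.mod_eq_of_lt h, h⟩
      · refine Or.inr ⟨?_, h⟩
        rw [Nat.mod_eq_sub_mod h]
        have hj := j.isLt
        exact Nat.mod_eq_of_lt (by omega)
    have hj := j.isLt
    rcases lt_or_ge (j : ℕ) n with h | h
    · have h1 : Fin.cast (Nat.add_comm m n) j = Fin.castAdd m ⟨(j : ℕ), h⟩ := by
        apply Fin.ext; simp
      rw [h1, finSumFinEquiv_symm_apply_castAdd]
      apply Fin.ext
      simp only [Equiv.sumComm_apply, Sum.swap_inl, finSumFinEquiv_apply_right,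
        Fin.natAdd_mk, Equiv.coe_addRight, Fin.val_add, hmval]
      rcases hM with hM | ⟨hn0, hM⟩ <;> rcases hout with ⟨h5, h6⟩ | ⟨h5, h6⟩ <;> omega
    · have h1 : Fin.cast (Nat.add_comm m n) j = Fin.natAdd n ⟨(j : ℕ) - n, by omega⟩ := by
        apply Fin.ext; simp; omega
      rw [h1, finSumFinEquiv_symm_apply_natAdd]
      apply Fin.ext
      simp only [Equiv.sumComm_apply, Sum.swap_inr, finSumFinEquiv_apply_left,
        Fin.castAdd_mk, Equiv.coe_addRight, Fin.val_add, hmval]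
      rcases hM with hM | ⟨hn0, hM⟩ <;> rcases hout with ⟨h5, h6⟩ | ⟨h5, h6⟩ <;> omega
  -- the block-swapping permutation
  have hρτ : ((finSumFinEquiv (m := m) (n := n)).trans
        ((finCongr (Nat.add_comm m n)).trans (finSumFinEquiv (m := n) (n := m)).symm)).trans
        (Equiv.sumComm (Fin n) (Fin m))
      = ((finSumFinEquiv (m := m) (n := n)).symm).permCongr
          (Equiv.addRight ((m : Fin (m + n)))) := by
    apply Equiv.ext; intro x
    apply (finSumFinEquiv (m := m) (n := n)).injective
    simp only [Equiv.permCongr_apply, Equiv.symm_symm, Equiv.trans_apply,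
      Equiv.apply_symm_apply, finCongr_apply]
    exact key (finSumFinEquiv x)
  have hsign : Equiv.Perm.sign (((finSumFinEquiv (m := m) (n := n)).trans
        ((finCongr (Nat.add_comm m n)).trans (finSumFinEquiv (m := n) (n := m)).symm)).trans
        (Equiv.sumComm (Fin n) (Fin m)))
      = (-1 : ℤˣ) ^ ((m + n - 1) * m) := by
    rw [hρτ, Equiv.Perm.sign_permCongr, sign_addRight_natCast]
  -- matrix identification
  have hA : ((Matrix.fromBlocks X (0 : Matrix (Fin m) (Fin m) F) N Y).submatrix
        (finSumFinEquiv (m := m) (n := n)).symm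
        (fun j : Fin (m + n) =>
          (finSumFinEquiv (m := n) (n := m)).symm (Fin.cast (Nat.add_comm m n) j)))
      = (((Matrix.fromBlocks (0 : Matrix (Fin m) (Fin m) F) X Y N).submatrix id
            (((finSumFinEquiv (m := m) (n := n)).trans
              ((finCongr (Nat.add_comm m n)).trans (finSumFinEquiv (m := n) (n := m)).symm)).trans
              (Equiv.sumComm (Fin n) (Fin m)))).submatrix
          (finSumFinEquiv (m := m) (n := n)).symm (finSumFinEquiv (m := m) (n := n)).symm) := by
    ext j i
    simp only [Matrix.submatrix_apply, id_eq, Equiv.trans_apply, Equiv.apply_symm_apply,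
      finCongr_apply]
    rcases (finSumFinEquiv (m := m) (n := n)).symm j with r | r <;>
      rcases (finSumFinEquiv (m := n) (n := m)).symm (Fin.cast (Nat.add_comm m n) i)
        with s | s <;> rfl
  rw [hA, Matrix.det_submatrix_equiv_self, Matrix.det_permute', hsign,
    Matrix.det_fromBlocks₂₂, Matrix.invOf_eq_nonsing_inv, zero_sub, Matrix.det_neg]
  simp only [Fintype.card_fin, Units.val_pow_eq_pow_val, Units.val_neg, Units.val_one,
    Int.cast_pow, Int.cast_neg, Int.cast_one]
  have hpar : (-1 : F) ^ ((m + n - 1) * m) * ((-1) ^ m) = (-1) ^ (m * (n + 1)) := by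
    rw [← pow_add, neg_one_pow_eq_pow_mod_two, neg_one_pow_eq_pow_mod_two (n := m * (n + 1))]
    congr 1
    have h1 : (m + n - 1) * m + m = m * (m + n) := by
      have h2 : m + n - 1 + 1 = m + n := by omega
      calc (m + n - 1) * m + m = (m + n - 1 + 1) * m := by ring
        _ = m * (m + n) := by rw [h2]; ring
    rw [h1, Nat.mul_mod, Nat.mul_mod m (n + 1)]
    rcases Nat.mod_two_eq_zero_or_one m with hm | hm <;> simp [hm] <;> omega
  linear_combination (N.det * (X * N⁻¹ * Y).det) * hpar
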